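/- arXiv:1210.7389 — 3 statements merged into one kernel-verified Lean document; each statement's English description precedes it below -/
import Mathlib

section
/- Let V and H be real Hilbert spaces with V continuously embedded in H, let u_0, ..., u_M ∈ V, and let {φ_1, ..., φ_d} be H-orthonormal eigenvectors of K v = (1/(M+1)) Σ_{ℓ=0}^{M} ⟨u_ℓ, v⟩_H u_ℓ with eigenvalues λ_j, spanning span{u_0,...,u_M}. Then for r ≤ d, (1/(M+1)) Σ_{ℓ=0}^{M} ‖u_ℓ − Σ_{j=1}^{r} ⟨u_ℓ, φ_j⟩_H φ_j‖_V² = Σ_{j=r+1}^{d} λ_j ‖φ_j‖_V². -/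
open scoped RealInnerProductSpace BigOperators

theorem pod_error_Vnorm {V H : Type*}
    [NormedAddCommGroup V] [InnerProductSpace ℝ V]
    [NormedAddCommGroup H] [InnerProductSpace ℝ H]
    (ι : V →L[ℝ] H) (hι : Function.Injective ι)
    (M d r : ℕ) (hr : r ≤ d)
    (u : Fin (M + 1) → V) (φ : Fin d → V) (lam : Fin d → ℝ)
    (hon : Orthonormal ℝ (fun j => ι (φ j)))
    (hspan : Submodule.span ℝ (Set.range φ) = Submodule.span ℝ (Set.range u))
    (hK : ∀ j : Fin d,
      (1 / (M + 1 : ℝ)) • ∑ ℓ : Fin (M + 1), ⟪ι (u ℓ), ι (φ j)⟫ • u ℓ = lam j • φ j) :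
    (1 / (M + 1 : ℝ)) * ∑ ℓ : Fin (M + 1),
        ‖u ℓ - ∑ j ∈ Finset.univ.filter (fun j : Fin d => (j : ℕ) < r),
            ⟪ι (u ℓ), ι (φ j)⟫ • φ j‖ ^ 2
      = ∑ j ∈ Finset.univ.filter (fun j : Fin d => r ≤ (j : ℕ)),
          lam j * ‖φ j‖ ^ 2 := by
  classical
  set c : Fin (M + 1) → Fin d → ℝ := fun ℓ j => ⟪ι (u ℓ), ι (φ j)⟫ with hc
  -- Step 1: each u ℓ is the sum of its φ-coefficients
  have hA : ∀ ℓ, u ℓ = ∑ j, c ℓ j • φ j := by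
    intro ℓ
    have hmem : u ℓ ∈ Submodule.span ℝ (Set.range φ) := by
      rw [hspan]; exact Submodule.subset_span ⟨ℓ, rfl⟩
    obtain ⟨a, ha⟩ := (Submodule.mem_span_range_iff_exists_fun (R := ℝ)).mp hmem
    have hcoef : ∀ j, c ℓ j = a j := by
      intro j
      have hιu : ι (u ℓ) = ∑ k, a k • ι (φ k) := by
        rw [← ha]; simp [map_sum, map_smul]
      have := hon.inner_left_fintype (l := a) (i := j)
      simpa [hc, hιu] using this
    rw [← ha]
    exact Finset.sum_congr rfl (fun j _ => by rw [hcoef j])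
  -- Step 2: correlation sums
  have hB : ∀ j k : Fin d,
      (1 / (M + 1 : ℝ)) * ∑ ℓ, c ℓ j * c ℓ k = if j = k then lam j else 0 := by
    intro j k
    have h1 := congrArg (fun x => ⟪ι x, ι (φ j)⟫) (hK k)
    simp only [map_smul, map_sum, inner_smul_left, sum_inner,
      real_inner_smul_left, RCLike.star_def, starRingEnd_apply, star_trivial] at h1
    have hortho := orthonormal_iff_ite.mp hon k j
    rw [hortho] at h1
    have : (1 / (M + 1 : ℝ)) * ∑ ℓ, c ℓ j * c ℓ k
        = (1 / (M + 1 : ℝ)) * ∑ ℓ, c ℓ k * c ℓ j := by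
      congr 1; exact Finset.sum_congr rfl (fun ℓ _ => mul_comm _ _)
    rw [this, h1]
    by_cases h : j = k
    · subst h; simp
    · simp [h, Ne.symm h]
  -- Step 3: residual is tail sum
  have hres : ∀ ℓ, u ℓ - ∑ j ∈ Finset.univ.filter (fun j : Fin d => (j : ℕ) < r),
      c ℓ j • φ j
      = ∑ j ∈ Finset.univ.filter (fun j : Fin d => r ≤ (j : ℕ)), c ℓ j • φ j := by
    intro ℓ
    have hsplit := Finset.sum_filter_add_sum_filter_not Finset.univ
      (fun j : Fin d => (j : ℕ) < r) (fun j => c ℓ j • φ j)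
    simp only [not_lt] at hsplit
    rw [hA ℓ, ← hsplit, add_sub_cancel_left]
  -- Step 4: expand norms
  have hnorm : ∀ ℓ, ‖u ℓ - ∑ j ∈ Finset.univ.filter (fun j : Fin d => (j : ℕ) < r),
      c ℓ j • φ j‖ ^ 2
      = ∑ j ∈ Finset.univ.filter (fun j : Fin d => r ≤ (j : ℕ)),
          ∑ k ∈ Finset.univ.filter (fun k : Fin d => r ≤ (k : ℕ)),
            c ℓ j * c ℓ k * ⟪φ j, φ k⟫ := by
    intro ℓ
    rw [hres ℓ, ← real_inner_self_eq_norm_sq, sum_inner]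
    refine Finset.sum_congr rfl (fun j _ => ?_)
    rw [inner_sum]
    refine Finset.sum_congr rfl (fun k _ => ?_)
    rw [real_inner_smul_left, real_inner_smul_right]; ring
  calc (1 / (M + 1 : ℝ)) * ∑ ℓ : Fin (M + 1),
        ‖u ℓ - ∑ j ∈ Finset.univ.filter (fun j : Fin d => (j : ℕ) < r),
            c ℓ j • φ j‖ ^ 2
      = ∑ j ∈ Finset.univ.filter (fun j : Fin d => r ≤ (j : ℕ)),
          ∑ k ∈ Finset.univ.filter (fun k : Fin d => r ≤ (k : ℕ)),
            ((1 / (M + 1 : ℝ)) * ∑ ℓ, c ℓ j * c ℓ k) * ⟪φ j, φ k⟫ := by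
        simp only [hnorm, Finset.mul_sum]
        rw [Finset.sum_comm]
        refine Finset.sum_congr rfl (fun j _ => ?_)
        rw [Finset.sum_comm]
        refine Finset.sum_congr rfl (fun k _ => ?_)
        rw [Finset.sum_mul]
        refine Finset.sum_congr rfl (fun ℓ _ => ?_)
        ring
    _ = ∑ j ∈ Finset.univ.filter (fun j : Fin d => r ≤ (j : ℕ)),
          lam j * ‖φ j‖ ^ 2 := by
        refine Finset.sum_congr rfl (fun j hj => ?_)
        rw [Finset.sum_congr rfl (fun k _ => by rw [hB j k])]
        simp only [ite_mul, zero_mul]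
        rw [Finset.sum_ite_eq]
        simp only [hj, if_true]
        rw [real_inner_self_eq_norm_sq]
end

section
/- Let φ_1, ..., φ_r be linearly independent elements of a real inner product space V that also carries a second inner product (from a space H). Let M_r be the r×r matrix with entries (M_r)_{jk} = ⟨φ_k, φ_j⟩_H and S_r the matrix with entries (S_r)_{jk} = ⟨φ_k, φ_j⟩_H + ⟨φ_k, φ_j⟩_V. Then for every v in span{φ_1,...,φ_r}, ‖v‖_H ≤ √(‖M_r‖₂ ‖S_r⁻¹‖₂) · (‖v‖_H² + ‖v‖_V²)^{1/2}. -/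
open scoped RealInnerProductSpace BigOperators

/-- Spectral (operator 2-) norm of a real square matrix. -/
noncomputable def specNorm {r : ℕ} (A : Matrix (Fin r) (Fin r) ℝ) : ℝ :=
  ‖(Matrix.toEuclideanLin A).toContinuousLinearMap‖

private lemma pod_aux {nM nS Q n2 w : ℝ} (hnM : 0 ≤ nM) (hnS : 0 ≤ nS) (hQ : 0 ≤ Q)
    (h1 : n2 * n2 ≤ nS * Q * n2) (h2 : w ≤ nM * n2) (hn2 : 0 ≤ n2) (hw : 0 ≤ w) :
    w ≤ nM * nS * Q := by
  rcases eq_or_lt_of_le hn2 with h0 | h0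
  · have : w ≤ 0 := by nlinarith
    nlinarith [mul_nonneg (mul_nonneg hnM hnS) hQ]
  · have hcn : n2 ≤ nS * Q := by nlinarith
    nlinarith

theorem pod_inverse_estimate_L2 {E : Type*} [NormedAddCommGroup E] [InnerProductSpace ℝ E]
    (a : E →ₗ[ℝ] E →ₗ[ℝ] ℝ) (hsymm : ∀ x y, a x y = a y x) (hpos : ∀ x, 0 ≤ a x x)
    (r : ℕ) (φ : Fin r → E) (hli : LinearIndependent ℝ φ)
    (Mr Sr : Matrix (Fin r) (Fin r) ℝ)
    (hM : ∀ j k, Mr j k = ⟪φ k, φ j⟫)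
    (hS : ∀ j k, Sr j k = ⟪φ k, φ j⟫ + a (φ k) (φ j))
    (hSinv : IsUnit Sr) :
    ∀ v ∈ Submodule.span ℝ (Set.range φ),
      ‖v‖ ≤ Real.sqrt (specNorm Mr * specNorm Sr⁻¹) *
        Real.sqrt (‖v‖ ^ 2 + a v v) := by
  intro v hv
  obtain ⟨c, hc⟩ := (Submodule.mem_span_range_iff_exists_fun ℝ).mp hv
  set M' := (Matrix.toEuclideanLin Mr).toContinuousLinearMap with hM'
  set S' := (Matrix.toEuclideanLin Sr).toContinuousLinearMap with hS'
  set c' : EuclideanSpace ℝ (Fin r) := (WithLp.equiv 2 (Fin r → ℝ)).symm c with hcc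
  -- general quadratic identity
  have key : ∀ (A : Matrix (Fin r) (Fin r) ℝ) (B : E →ₗ[ℝ] E →ₗ[ℝ] ℝ),
      (∀ j k, A j k = B (φ k) (φ j)) → ∀ d e : EuclideanSpace ℝ (Fin r),
      ⟪(Matrix.toEuclideanLin A).toContinuousLinearMap d, e⟫ =
        B (∑ i, d i • φ i) (∑ i, e i • φ i) := by
    intro A B hAB d e
    simp only [LinearMap.coe_toContinuousLinearMap', PiLp.inner_apply,
      RCLike.inner_apply, conj_trivial, map_sum, map_smul,
      LinearMap.sum_apply, LinearMap.smul_apply, smul_eq_mul]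
    simp only [Matrix.toEuclideanLin_apply]
    simp only [Matrix.mulVec,
      dotProduct, hAB]
    refine Finset.sum_congr rfl fun j _ => ?_
    rw [Finset.mul_sum, Finset.mul_sum]
    refine Finset.sum_congr rfl fun k _ => ?_
    ring
  have hvc : v = ∑ i, c' i • φ i := by rw [← hc]; rfl
  have e1 : ⟪M' c', c'⟫ = ‖v‖ ^ 2 := by
    rw [key Mr (innerₗ E) (by simp [hM]) c' c', ← hvc, innerₗ_apply_apply,
      real_inner_self_eq_norm_sq]
  have e2 : ⟪S' c', c'⟫ = ‖v‖ ^ 2 + a v v := by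
    rw [key Sr (innerₗ E + a) (by intro j k; simp [hS]) c' c', ← hvc]
    simp [real_inner_self_eq_norm_sq]
  have hQ0 : 0 ≤ ‖v‖ ^ 2 + a v v := by nlinarith [hpos v, sq_nonneg ‖v‖]
  -- semidefiniteness and symmetry of the S-form
  have hsd : ∀ d : EuclideanSpace ℝ (Fin r), 0 ≤ ⟪S' d, d⟫ := by
    intro d
    rw [key Sr (innerₗ E + a) (by intro j k; simp [hS]) d d]
    have h1 := hpos (∑ i, d i • φ i)
    have h2 : (0:ℝ) ≤ ⟪(∑ i, d i • φ i), (∑ i, d i • φ i)⟫ := real_inner_self_nonneg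
    simp only [LinearMap.add_apply, innerₗ_apply_apply]
    linarith
  have hsy : ∀ d e : EuclideanSpace ℝ (Fin r), ⟪S' d, e⟫ = ⟪S' e, d⟫ := by
    intro d e
    rw [key Sr (innerₗ E + a) (by intro j k; simp [hS]) d e,
      key Sr (innerₗ E + a) (by intro j k; simp [hS]) e d]
    simp only [LinearMap.add_apply, innerₗ_apply_apply]
    rw [real_inner_comm, hsymm]
  -- Cauchy–Schwarz for the S-form
  have cs : ∀ d e : EuclideanSpace ℝ (Fin r), ⟪S' d, e⟫ ^ 2 ≤ ⟪S' d, d⟫ * ⟪S' e, e⟫ := by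
    intro d e
    have h := discrim_le_zero (a := ⟪S' e, e⟫) (b := 2 * ⟪S' d, e⟫) (c := ⟪S' d, d⟫) ?_
    · rw [discrim] at h; nlinarith
    · intro t
      have := hsd (d + t • e)
      have hde : ⟪S' (d + t • e), d + t • e⟫
          = ⟪S' d, d⟫ + 2 * t * ⟪S' d, e⟫ + t ^ 2 * ⟪S' e, e⟫ := by
        simp only [map_add, map_smul, inner_add_left, inner_add_right,
          real_inner_smul_left, real_inner_smul_right]
        rw [hsy d e]
        ring
      rw [hde] at this
      linarith
  -- u := Sr⁻¹ c'
  set u : EuclideanSpace ℝ (Fin r) := (Matrix.toEuclideanLin Sr⁻¹).toContinuousLinearMap c' with hu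
  have hSu : S' u = c' := by
    have hdet : IsUnit Sr.det := (Matrix.isUnit_iff_isUnit_det Sr).mp hSinv
    have hmul : Sr * Sr⁻¹ = 1 := Matrix.mul_nonsing_inv Sr hdet
    rw [hS', hu]
    simp only [LinearMap.coe_toContinuousLinearMap']
    rw [Matrix.toEuclideanLin_apply, Matrix.toEuclideanLin_apply]
    simp [Matrix.mulVec_mulVec, hmul]
  -- ‖c'‖² ≤ nS * Q
  have hn2 : ⟪c', c'⟫ = ‖c'‖ ^ 2 := real_inner_self_eq_norm_sq c'
  have hQS : ⟪c', u⟫ ≤ specNorm Sr⁻¹ * ‖c'‖ ^ 2 := by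
    calc ⟪c', u⟫ ≤ ‖c'‖ * ‖u‖ := real_inner_le_norm c' u
      _ ≤ ‖c'‖ * (specNorm Sr⁻¹ * ‖c'‖) := by
          have := (Matrix.toEuclideanLin Sr⁻¹).toContinuousLinearMap.le_opNorm c'
          have h0 : (0:ℝ) ≤ ‖c'‖ := norm_nonneg _
          exact mul_le_mul_of_nonneg_left this h0
      _ = specNorm Sr⁻¹ * ‖c'‖ ^ 2 := by ring
  have hcs := cs u c'
  rw [hSu, hn2, e2] at hcs
  have hnS0 : 0 ≤ specNorm Sr⁻¹ := norm_nonneg _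
  have hnM0 : 0 ≤ specNorm Mr := norm_nonneg _
  have hc2 : ‖c'‖ ^ 2 * ‖c'‖ ^ 2 ≤ specNorm Sr⁻¹ * (‖v‖ ^ 2 + a v v) * ‖c'‖ ^ 2 := by
    nlinarith [hQ0, sq_nonneg ‖c'‖]
  -- ‖v‖² ≤ nM * ‖c'‖²
  have hv2 : ‖v‖ ^ 2 ≤ specNorm Mr * ‖c'‖ ^ 2 := by
    rw [← e1]
    calc ⟪M' c', c'⟫ ≤ ‖M' c'‖ * ‖c'‖ := real_inner_le_norm _ _
      _ ≤ specNorm Mr * ‖c'‖ * ‖c'‖ :=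
          mul_le_mul_of_nonneg_right (M'.le_opNorm c') (norm_nonneg _)
      _ = specNorm Mr * ‖c'‖ ^ 2 := by ring
  have hmain : ‖v‖ ^ 2 ≤ specNorm Mr * specNorm Sr⁻¹ * (‖v‖ ^ 2 + a v v) :=
    pod_aux hnM0 hnS0 hQ0 hc2 hv2 (sq_nonneg _) (sq_nonneg _)
  calc ‖v‖ = Real.sqrt (‖v‖ ^ 2) := (Real.sqrt_sq (norm_nonneg v)).symm
    _ ≤ Real.sqrt (specNorm Mr * specNorm Sr⁻¹ * (‖v‖ ^ 2 + a v v)) :=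
        Real.sqrt_le_sqrt hmain
    _ = Real.sqrt (specNorm Mr * specNorm Sr⁻¹) * Real.sqrt (‖v‖ ^ 2 + a v v) :=
        Real.sqrt_mul (mul_nonneg hnM0 hnS0) _
end

section
/- Let X be a real Hilbert space with two inner products a(·,·) (symmetric, coercive: a(v,v) ≥ 0) and (·,·) (the L² inner product with norm ‖·‖), and let b* : X³ → ℝ be trilinear with b*(u,v,v) = 0. Let ν, Δt, α > 0 and P'_R a bounded linear operator. Suppose (u_r^k)_{k=0}^{M} ⊂ X satisfies, for all k and all φ ∈ X_r (a finite-dimensional subspace containing each u_r^k): ((u_r^{k+1} − u_r^k)/Δt, φ) + ν (∇u_r^{k+1}, ∇φ) + b*(u_r^{k+1}, u_r^{k+1}, φ) + α (P'_R ∇u_r^{k+1}, P'_R ∇φ) = (f^{k+1}, φ). Then ‖u_r^M‖² + ν Δt Σ_{k=0}^{M−1} ‖∇u_r^{k+1}‖² ≤ ‖u_r^0‖² + (Δt/ν) Σ_{k=0}^{M−1} ‖f^{k+1}‖_{−1}², where ‖f‖_{−1} = sup_{0≠v∈X} (f,v)/‖∇v‖. -/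
open scoped RealInnerProductSpace BigOperators

theorem vms_pod_rom_stability {X Y : Type*}
    [NormedAddCommGroup X] [InnerProductSpace ℝ X]
    [NormedAddCommGroup Y] [InnerProductSpace ℝ Y]
    (G : X →L[ℝ] Y) (c : ℝ) (hc : 0 < c) (hG : ∀ v, c * ‖v‖ ≤ ‖G v‖)
    (P : Y →L[ℝ] Y)
    (b : X → X → X → ℝ) (hb : ∀ u v, b u v v = 0)
    (ν Δt α : ℝ) (hν : 0 < ν) (hΔt : 0 < Δt) (hα : 0 < α)
    (M : ℕ) (Xr : Submodule ℝ X) [FiniteDimensional ℝ Xr]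
    (u f : ℕ → X)
    (hu : ∀ k ≤ M, u k ∈ Xr)
    (heq : ∀ k < M, ∀ φ ∈ Xr,
      ⟪Δt⁻¹ • (u (k + 1) - u k), φ⟫ + ν * ⟪G (u (k + 1)), G φ⟫
        + b (u (k + 1)) (u (k + 1)) φ
        + α * ⟪P (G (u (k + 1))), P (G φ)⟫
      = ⟪f (k + 1), φ⟫) :
    ‖u M‖ ^ 2 + ν * Δt * ∑ k ∈ Finset.range M, ‖G (u (k + 1))‖ ^ 2
      ≤ ‖u 0‖ ^ 2 + (Δt / ν) * ∑ k ∈ Finset.range M,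
          (⨆ v : X, ⟪f (k + 1), v⟫ / ‖G v‖) ^ 2 := by
  set S : ℕ → ℝ := fun k => ⨆ v : X, ⟪f (k + 1), v⟫ / ‖G v‖ with hSdef
  -- boundedness of the sup defining the dual norm
  have hbdd : ∀ j : ℕ, BddAbove (Set.range fun v : X => ⟪f j, v⟫ / ‖G v‖) := by
    intro j
    refine ⟨‖f j‖ / c, ?_⟩
    rintro _ ⟨v, rfl⟩
    rcases eq_or_ne v 0 with rfl | hv
    · simp [div_nonneg (norm_nonneg _) hc.le]
    · have h1 : 0 < ‖G v‖ := lt_of_lt_of_le (mul_pos hc (norm_pos_iff.mpr hv)) (hG v)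
      rw [div_le_div_iff₀ h1 hc]
      have h2 : ⟪f j, v⟫ ≤ ‖f j‖ * ‖v‖ := real_inner_le_norm _ _
      nlinarith [hG v, norm_nonneg (f j), norm_nonneg v, hc]
  have hfb : ∀ k, ⟪f (k + 1), u (k + 1)⟫ ≤ S k * ‖G (u (k + 1))‖ := by
    intro k
    rcases eq_or_ne (u (k + 1)) 0 with hz | hz
    · rw [hz]; simp
    · have h0 : 0 < ‖G (u (k + 1))‖ :=
        lt_of_lt_of_le (mul_pos hc (norm_pos_iff.mpr hz)) (hG _)
      have hle : ⟪f (k + 1), u (k + 1)⟫ / ‖G (u (k + 1))‖ ≤ S k :=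
        le_ciSup (hbdd (k + 1)) (u (k + 1))
      exact (div_le_iff₀ h0).mp hle
  -- per-step estimate (multiplied through by ν)
  have key : ∀ k < M,
      ν * ‖u (k + 1)‖ ^ 2 - ν * ‖u k‖ ^ 2 + ν ^ 2 * Δt * ‖G (u (k + 1))‖ ^ 2
        ≤ Δt * S k ^ 2 := by
    intro k hk
    have hmem : u (k + 1) ∈ Xr := hu (k + 1) (by omega)
    have he := heq k hk (u (k + 1)) hmem
    rw [hb] at he
    rw [real_inner_smul_left, real_inner_self_eq_norm_sq] at he
    have hp : (0:ℝ) ≤ ⟪P (G (u (k + 1))), P (G (u (k + 1)))⟫ := real_inner_self_nonneg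
    have hA : ⟪u (k + 1) - u k, u (k + 1)⟫
        = Δt * (⟪f (k + 1), u (k + 1)⟫ - ν * ‖G (u (k + 1))‖ ^ 2
            - α * ⟪P (G (u (k + 1))), P (G (u (k + 1)))⟫) := by
      have h0 : Δt⁻¹ * ⟪u (k + 1) - u k, u (k + 1)⟫
          = ⟪f (k + 1), u (k + 1)⟫ - ν * ‖G (u (k + 1))‖ ^ 2
            - α * ⟪P (G (u (k + 1))), P (G (u (k + 1)))⟫ := by linarith [he]
      calc ⟪u (k + 1) - u k, u (k + 1)⟫
          = Δt * (Δt⁻¹ * ⟪u (k + 1) - u k, u (k + 1)⟫) := by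
            rw [← mul_assoc, mul_inv_cancel₀ hΔt.ne', one_mul]
        _ = _ := by rw [h0]
    have hsub : ⟪u (k + 1) - u k, u (k + 1)⟫
        = ‖u (k + 1)‖ ^ 2 - ⟪u k, u (k + 1)⟫ := by
      rw [inner_sub_left, real_inner_self_eq_norm_sq]
    rw [hsub] at hA
    have hib : ⟪u k, u (k + 1)⟫ ≤ ‖u k‖ * ‖u (k + 1)‖ := real_inner_le_norm _ _
    have h1 : ‖u (k + 1)‖ ^ 2 - ⟪u k, u (k + 1)⟫
        + Δt * ν * ‖G (u (k + 1))‖ ^ 2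
        ≤ Δt * (S k * ‖G (u (k + 1))‖) := by
      have := mul_le_mul_of_nonneg_left (hfb k) hΔt.le
      nlinarith [mul_nonneg (mul_nonneg hΔt.le hα.le) hp]
    nlinarith [mul_le_mul_of_nonneg_left h1 (by positivity : (0:ℝ) ≤ 2 * ν),
      mul_le_mul_of_nonneg_left hib (by positivity : (0:ℝ) ≤ 2 * ν),
      mul_nonneg hν.le (sq_nonneg (‖u (k + 1)‖ - ‖u k‖)),
      mul_nonneg hΔt.le (sq_nonneg (S k - ν * ‖G (u (k + 1))‖))]
  -- sum the per-step estimates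
  have hsum :
      ν * ‖u M‖ ^ 2 - ν * ‖u 0‖ ^ 2
        + ν ^ 2 * Δt * ∑ k ∈ Finset.range M, ‖G (u (k + 1))‖ ^ 2
        ≤ Δt * ∑ k ∈ Finset.range M, S k ^ 2 := by
    have htel : ∑ k ∈ Finset.range M, (ν * ‖u (k + 1)‖ ^ 2 - ν * ‖u k‖ ^ 2)
        = ν * ‖u M‖ ^ 2 - ν * ‖u 0‖ ^ 2 :=
      Finset.sum_range_sub (fun k => ν * ‖u k‖ ^ 2) M
    have hs : ∑ k ∈ Finset.range M,
        (ν * ‖u (k + 1)‖ ^ 2 - ν * ‖u k‖ ^ 2 + ν ^ 2 * Δt * ‖G (u (k + 1))‖ ^ 2)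
        ≤ ∑ k ∈ Finset.range M, Δt * S k ^ 2 := by
      refine Finset.sum_le_sum fun k hk => key k (Finset.mem_range.mp hk)
    rw [Finset.sum_add_distrib, htel, ← Finset.mul_sum, ← Finset.mul_sum] at hs
    linarith
  have hgoal_eq : (∑ k ∈ Finset.range M, (⨆ v : X, ⟪f (k + 1), v⟫ / ‖G v‖) ^ 2)
      = ∑ k ∈ Finset.range M, S k ^ 2 := rfl
  rw [hgoal_eq, ← mul_le_mul_iff_right₀ hν]
  have hr2 : ν * (‖u 0‖ ^ 2 + Δt / ν * ∑ k ∈ Finset.range M, S k ^ 2)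
      = ν * ‖u 0‖ ^ 2 + Δt * ∑ k ∈ Finset.range M, S k ^ 2 := by
    field_simp
  rw [hr2, mul_add]
  nlinarith [hsum]
end
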